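/- arXiv:2205.08063 — 2 statements merged into one kernel-verified Lean document; each statement's English description precedes it below -/
import Mathlib

section
/- Let n = 2, τ > 0, and let A, B, H(λ,K) be as in the context (so A = [[1,τ],[0,1]] and B = [0,τ]^T). Let 0 < λ_2 ≤ λ_N, and define K*_1 = 2λ_2/(τ^2(λ_2 + λ_N)λ_N) and K*_2 = 2/(λ_N τ). Then for every λ with λ_2 ≤ λ ≤ λ_N, the spectral radius satisfies ρ(H(λ, [K*_1, K*_2])) ≤ √((λ_N − λ_2)/(λ_N + λ_2)). -/
open Matrix

/-- The n×n system matrix `A`: ones on the diagonal, `τ` on the superdiagonal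
(for `n = 2` this is `[[1, τ], [0, 1]]`). -/
noncomputable def Amat (n : ℕ) (τ : ℝ) : Matrix (Fin n) (Fin n) ℝ :=
  Matrix.of fun i j => if (j : ℕ) = (i : ℕ) then 1 else if (j : ℕ) = (i : ℕ) + 1 then τ else 0

/-- The n×1 input matrix `B`: last entry `τ`, all other entries `0`
(for `n = 2` this is `[0, τ]ᵀ`). -/
noncomputable def Bmat (n : ℕ) (τ : ℝ) : Matrix (Fin n) (Fin 1) ℝ :=
  Matrix.of fun i _ => if (i : ℕ) = n - 1 then τ else 0

/-- `H(λ, K) = A - λ B K`. -/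
noncomputable def Hmat (n : ℕ) (τ : ℝ) (lam : ℝ) (K : Matrix (Fin 1) (Fin n) ℝ) :
    Matrix (Fin n) (Fin n) ℝ :=
  Amat n τ - lam • (Bmat n τ * K)

/-- Spectral radius of a real matrix: the largest modulus of its complex eigenvalues. -/
noncomputable def specRad {n : ℕ} (M : Matrix (Fin n) (Fin n) ℝ) : ℝ :=
  sSup ((‖·‖) '' spectrum ℂ (M.map (Complex.ofReal ·)))


lemma hmat_two (τ lam k1 k2 : ℝ) :
    Hmat 2 τ lam !![k1, k2] = !![1, τ; -(lam*τ*k1), 1 - lam*τ*k2] := by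
  ext i j
  fin_cases i <;> fin_cases j <;>
    simp [Hmat, Amat, Bmat, Matrix.mul_apply, Fin.sum_univ_succ] <;> ring

lemma spec_quad (M : Matrix (Fin 2) (Fin 2) ℂ) (μ : ℂ) (h : μ ∈ spectrum ℂ M) :
    (μ - M 0 0) * (μ - M 1 1) - M 0 1 * M 1 0 = 0 := by
  rw [spectrum.mem_iff] at h
  have hdet : ((algebraMap ℂ (Matrix (Fin 2) (Fin 2) ℂ)) μ - M).det = 0 := by
    by_contra hd
    exact h ((Matrix.isUnit_iff_isUnit_det _).2 (isUnit_iff_ne_zero.2 hd))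
  rw [Matrix.det_fin_two] at hdet
  simp only [Matrix.sub_apply, Matrix.algebraMap_matrix_apply] at hdet
  simp at hdet
  linear_combination hdet

lemma quad_root_bound (t d r : ℝ) (hr0 : 0 ≤ r) (ht0 : 0 ≤ t) (htr : t ≤ 2*r)
    (hd : |d| ≤ r^2) (hpr : 0 ≤ r^2 - t*r + d) (μ : ℂ)
    (h : μ^2 - (t:ℂ)*μ + (d:ℂ) = 0) : ‖μ‖ ≤ r := by
  obtain ⟨hd1, hd2⟩ := abs_le.mp hd
  set x := μ.re with hx
  set y := μ.im with hy
  have hre : x^2 - y^2 - t*x + d = 0 := by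
    have := congrArg Complex.re h
    simpa [pow_two, Complex.mul_re, Complex.mul_im] using this
  have him : y * (2*x - t) = 0 := by
    have := congrArg Complex.im h
    simp [pow_two, Complex.mul_re, Complex.mul_im] at this
    linarith
  have habs : ‖μ‖ = Real.sqrt (x^2 + y^2) := by
    rw [Complex.norm_def, Complex.normSq_apply]; ring_nf; rfl
  rcases mul_eq_zero.mp him with hy0 | hxt
  · -- real root
    have hx2 : x^2 - t*x + d = 0 := by rw [hy0] at hre; linarith
    have hxr : x ≤ r := by
      by_contra hc
      push_neg at hc
      nlinarith [mul_pos (sub_pos.2 hc) (by linarith : (0:ℝ) < x + r - t)]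
    have hxl : -r ≤ x := by
      by_contra hc
      push_neg at hc
      nlinarith [mul_pos (by linarith : (0:ℝ) < -(x + r)) (by linarith : (0:ℝ) < -(x - r - t))]
    rw [habs, hy0]
    calc Real.sqrt (x^2 + 0^2) = |x| := by
          rw [← Real.sqrt_sq_eq_abs]; norm_num
      _ ≤ r := abs_le.mpr ⟨hxl, hxr⟩
  · -- complex pair
    have hxv : x = t/2 := by linarith
    have hsum : x^2 + y^2 = d := by nlinarith
    rw [habs, hsum]
    calc Real.sqrt d ≤ Real.sqrt (r^2) := Real.sqrt_le_sqrt (by linarith)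
      _ = r := Real.sqrt_sq hr0

/-- for `n = 2`, `K* = [2λ₂/(τ²(λ₂+λ_N)λ_N), 2/(λ_N τ)]`, and every
`λ₂ ≤ λ ≤ λ_N`, one has `ρ(H(λ, K*)) ≤ √((λ_N − λ₂)/(λ_N + λ₂))`. -/
theorem stmt_8 (τ : ℝ) (hτ : 0 < τ) (l2 lN : ℝ) (h2 : 0 < l2) (h2N : l2 ≤ lN)
    (lam : ℝ) (hlam2 : l2 ≤ lam) (hlamN : lam ≤ lN) :
    specRad (Hmat 2 τ lam !![2 * l2 / (τ ^ 2 * (l2 + lN) * lN), 2 / (lN * τ)])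
      ≤ Real.sqrt ((lN - l2) / (lN + l2)) := by
  have hlN : 0 < lN := lt_of_lt_of_le h2 h2N
  have hs : 0 < l2 + lN := by linarith
  have hτ' : τ ≠ 0 := ne_of_gt hτ
  have hlN' : lN ≠ 0 := ne_of_gt hlN
  have hs' : l2 + lN ≠ 0 := ne_of_gt hs
  set r := Real.sqrt ((lN - l2) / (lN + l2)) with hrdef
  have hr0 : 0 ≤ r := Real.sqrt_nonneg _
  have hr2 : r^2 = (lN - l2) / (lN + l2) :=
    Real.sq_sqrt (div_nonneg (by linarith) (by linarith))
  set k1 := 2 * l2 / (τ ^ 2 * (l2 + lN) * lN) with hk1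
  set k2 := 2 / (lN * τ) with hk2
  set t := 2 - lam*τ*k2 with htdef
  set d := (1:ℝ)*(1 - lam*τ*k2) - τ*(-(lam*τ*k1)) with hddef
  have hs2 : 0 < lN + l2 := by linarith
  have ht : t = 2 - 2*lam/lN := by rw [htdef, hk2]; field_simp
  have hd : d = ((l2 + lN) - 2*lam)/(lN + l2) := by
    rw [hddef, hk1, hk2]; field_simp; ring
  have ht0 : 0 ≤ t := by
    rw [ht, sub_nonneg, div_le_iff₀ hlN]; linarith
  -- r ≤ lN / (lN + l2)
  have hrle : r ≤ lN / (lN + l2) := by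
    have h1 : (lN - l2) / (lN + l2) ≤ (lN / (lN + l2))^2 := by
      rw [div_pow, div_le_div_iff₀ hs2 (by positivity)]
      nlinarith [mul_pos (mul_pos h2 h2) hs2]
    calc r ≤ Real.sqrt ((lN / (lN + l2))^2) := Real.sqrt_le_sqrt h1
      _ = lN / (lN + l2) := Real.sqrt_sq (by positivity)
  have htr : t ≤ 2*r := by
    have h1 : (lN - l2) / lN ≤ r := by
      rw [hrdef, Real.le_sqrt (div_nonneg (by linarith) (le_of_lt hlN))]
      · rw [div_pow, div_le_div_iff₀ (by positivity) hs2]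
        nlinarith [mul_nonneg (by linarith : (0:ℝ) ≤ lN - l2) (sq_nonneg l2)]
      · exact div_nonneg (by linarith) (by linarith)
    have h2' : t ≤ 2 * ((lN - l2)/lN) := by
      rw [ht]
      have e : 2*((lN - l2)/lN) = 2 - 2*l2/lN := by field_simp
      have hmono : 2*l2/lN ≤ 2*lam/lN := by gcongr
      linarith
    linarith [mul_le_mul_of_nonneg_left h1 (by norm_num : (0:ℝ) ≤ 2)]
  have hdabs : |d| ≤ r^2 := by
    rw [abs_le, hr2, hd]
    constructor
    · rw [neg_le, ← neg_div, div_le_div_iff₀ hs2 hs2]; nlinarith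
    · rw [div_le_div_iff₀ hs2 hs2]; nlinarith
  have hpr : 0 ≤ r^2 - t*r + d := by
    have h1 : t*r ≤ t*(lN/(lN+l2)) := mul_le_mul_of_nonneg_left hrle ht0
    have h2' : r^2 + d = t * (lN/(lN+l2)) := by
      rw [hr2, hd, ht]; field_simp; ring
    nlinarith [h1, h2']
  -- main bound
  rw [hmat_two]
  apply Real.sSup_le _ hr0
  rintro x ⟨μ, hμ, rfl⟩
  apply quad_root_bound t d r hr0 ht0 htr hdabs hpr
  have hq := spec_quad _ μ hμ
  simp [Matrix.map_apply] at hq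
  rw [htdef, hddef]
  push_cast
  push_cast at hq
  linear_combination hq
end

section
/- Let n = 2, τ > 0, and let A, B, H(λ,K) be as in the context. Let 0 < λ_2 ≤ λ_N. Then the minimum over all row vectors K ∈ ℝ^{1×2} of max( ρ(H(λ_2,K)), ρ(H(λ_N,K)) ) equals √((λ_N − λ_2)/(λ_N + λ_2)), and this minimum is attained exactly at K* = [2λ_2/(τ^2(λ_2 + λ_N)λ_N), 2/(λ_N τ)]. -/
open Matrix

lemma spec2_mem (M : Matrix (Fin 2) (Fin 2) ℂ) (z : ℂ) :
    z ∈ spectrum ℂ M ↔ (z - M 0 0) * (z - M 1 1) - M 0 1 * M 1 0 = 0 := by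
  rw [spectrum.mem_iff, Matrix.isUnit_iff_isUnit_det, isUnit_iff_ne_zero, not_not,
    Matrix.det_fin_two]
  simp [Matrix.algebraMap_matrix_apply]

lemma spec2_set (M : Matrix (Fin 2) (Fin 2) ℂ) (r₁ r₂ : ℂ)
    (hs : r₁ + r₂ = M 0 0 + M 1 1) (hp : r₁ * r₂ = M 0 0 * M 1 1 - M 0 1 * M 1 0) :
    spectrum ℂ M = {r₁, r₂} := by
  ext z
  rw [spec2_mem]
  constructor
  · intro h
    have h2 : (z - r₁) * (z - r₂) = 0 := by linear_combination h - z * hs + hp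
    rcases mul_eq_zero.mp h2 with h1 | h1
    · left; exact sub_eq_zero.mp h1
    · right; exact sub_eq_zero.mp h1
  · rintro (rfl | rfl)
    · linear_combination z * hs - hp
    · linear_combination z * hs - hp

lemma specRad_eq_max (M : Matrix (Fin 2) (Fin 2) ℝ) (r₁ r₂ : ℂ)
    (hs : r₁ + r₂ = (M 0 0 : ℂ) + (M 1 1 : ℂ))
    (hp : r₁ * r₂ = (M 0 0 : ℂ) * (M 1 1 : ℂ) - (M 0 1 : ℂ) * (M 1 0 : ℂ)) :
    specRad M = max (‖r₁‖) (‖r₂‖) := by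
  have hset : spectrum ℂ (M.map (Complex.ofReal ·)) = {r₁, r₂} := by
    apply spec2_set
    · simpa using hs
    · simpa using hp
  rw [specRad, hset, Set.image_pair, csSup_pair]

lemma complex_prod_aux (x y : ℝ) :
    ((x:ℂ) + y*Complex.I) * (x - y*Complex.I) = ((x^2 + y^2 : ℝ) : ℂ) := by
  push_cast; ring_nf; rw [Complex.I_sq]; ring

lemma roots_exist (t d : ℝ) :
    ∃ r₁ r₂ : ℂ, r₁ + r₂ = (t : ℂ) ∧ r₁ * r₂ = (d : ℂ) ∧
      ((r₁.im = 0 ∧ r₂.im = 0) ∨ r₂ = (starRingEnd ℂ) r₁) := by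
  rcases le_or_gt (4*d) (t^2) with hD | hD
  · have hnn : (0:ℝ) ≤ t^2 - 4*d := by linarith
    have hsq := Real.sq_sqrt hnn
    refine ⟨((t + Real.sqrt (t^2-4*d))/2 : ℝ), ((t - Real.sqrt (t^2-4*d))/2 : ℝ),
      ?_, ?_, Or.inl ⟨by simp, by simp⟩⟩
    · rw [← Complex.ofReal_add, Complex.ofReal_inj]; ring
    · rw [← Complex.ofReal_mul, Complex.ofReal_inj]; linear_combination (-1/4) * hsq
  · have hnn : (0:ℝ) ≤ d - t^2/4 := by linarith
    have hsq := Real.sq_sqrt hnn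
    refine ⟨(t/2 : ℝ) + (Real.sqrt (d - t^2/4)) * Complex.I,
      (t/2 : ℝ) - (Real.sqrt (d - t^2/4)) * Complex.I, ?_, ?_, Or.inr ?_⟩
    · push_cast; ring
    · rw [complex_prod_aux, Complex.ofReal_inj]; linear_combination hsq
    · rw [map_add, _root_.map_mul, Complex.conj_ofReal, Complex.conj_ofReal, Complex.conj_I]
      ring

lemma specRad_structure (M : Matrix (Fin 2) (Fin 2) ℝ) :
    ∃ r₁ r₂ : ℂ, r₁ + r₂ = ((M 0 0 + M 1 1 : ℝ) : ℂ) ∧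
      r₁ * r₂ = ((M 0 0 * M 1 1 - M 0 1 * M 1 0 : ℝ) : ℂ) ∧
      specRad M = max (‖r₁‖) (‖r₂‖) ∧
      ((r₁.im = 0 ∧ r₂.im = 0) ∨ r₂ = (starRingEnd ℂ) r₁) := by
  obtain ⟨r₁, r₂, hs, hp, hor⟩ :=
    roots_exist (M 0 0 + M 1 1) (M 0 0 * M 1 1 - M 0 1 * M 1 0)
  exact ⟨r₁, r₂, hs, hp,
    specRad_eq_max M r₁ r₂ (by rw [hs]; push_cast; ring) (by rw [hp]; push_cast; ring), hor⟩

lemma abs_det_le_specRad_sq (M : Matrix (Fin 2) (Fin 2) ℝ) :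
    |M 0 0 * M 1 1 - M 0 1 * M 1 0| ≤ specRad M ^ 2 := by
  obtain ⟨r₁, r₂, hs, hp, hmax, -⟩ := specRad_structure M
  have h1 : ‖r₁‖ ≤ specRad M := hmax ▸ le_max_left _ _
  have h2 : ‖r₂‖ ≤ specRad M := hmax ▸ le_max_right _ _
  have h0 : 0 ≤ ‖r₁‖ := norm_nonneg _
  have h0' : 0 ≤ ‖r₂‖ := norm_nonneg _
  have hprod : ‖r₁‖ * ‖r₂‖ = |M 0 0 * M 1 1 - M 0 1 * M 1 0| := by
    rw [← norm_mul, hp, Complex.norm_real, Real.norm_eq_abs]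
  nlinarith [hprod]

lemma specRad_nonneg2 (M : Matrix (Fin 2) (Fin 2) ℝ) : 0 ≤ specRad M := by
  obtain ⟨r₁, r₂, -, -, hmax, -⟩ := specRad_structure M
  rw [hmax]
  exact le_trans (norm_nonneg _) (le_max_left _ _)


lemma specRad_real_pair (M : Matrix (Fin 2) (Fin 2) ℝ) (c : ℝ) (hc : 0 ≤ c)
    (htr : M 0 0 + M 1 1 = 0)
    (hdet : M 0 0 * M 1 1 - M 0 1 * M 1 0 = -c^2) :
    specRad M = c := by
  have h := specRad_eq_max M (c : ℂ) (-(c : ℂ))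
    (by rw [← Complex.ofReal_add, htr]; push_cast; ring)
    (by rw [← Complex.ofReal_mul, ← Complex.ofReal_mul, ← Complex.ofReal_sub, hdet]
        push_cast; ring)
  rw [h, norm_neg, Complex.norm_real, Real.norm_eq_abs, abs_of_nonneg hc, max_self]

lemma specRad_conj_pair (M : Matrix (Fin 2) (Fin 2) ℝ) (c : ℝ)
    (h4 : (M 0 0 + M 1 1)^2 ≤ 4*(M 0 0 * M 1 1 - M 0 1 * M 1 0))
    (hdet : M 0 0 * M 1 1 - M 0 1 * M 1 0 = c) :
    specRad M = Real.sqrt c := by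
  have hnn : (0:ℝ) ≤ c - ((M 0 0 + M 1 1)/2)^2 := by nlinarith [hdet]
  have hsq := Real.sq_sqrt hnn
  set t := M 0 0 + M 1 1 with ht
  set b := Real.sqrt (c - (t/2)^2) with hb
  have h := specRad_eq_max M ((t/2 : ℝ) + (b:ℝ) * Complex.I) ((t/2 : ℝ) - (b:ℝ) * Complex.I)
    (by rw [show ((M 0 0 :ℝ):ℂ) + ((M 1 1:ℝ):ℂ) = ((t:ℝ):ℂ) by rw [ht]; push_cast; ring]
        push_cast; ring)
    (by rw [complex_prod_aux,
          show ((M 0 0:ℝ):ℂ) * ((M 1 1:ℝ):ℂ) - ((M 0 1:ℝ):ℂ) * ((M 1 0:ℝ):ℂ) = ((c:ℝ):ℂ) by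
            rw [← Complex.ofReal_mul, ← Complex.ofReal_mul, ← Complex.ofReal_sub, hdet],
          Complex.ofReal_inj]
        linear_combination hsq)
  have e1 : ‖((t/2:ℝ):ℂ) + (b:ℝ)*Complex.I‖ = Real.sqrt ((t/2)^2 + b^2) :=
    Complex.norm_add_mul_I _ _
  have e2 : ‖((t/2:ℝ):ℂ) - (b:ℝ)*Complex.I‖ = Real.sqrt ((t/2)^2 + b^2) := by
    rw [show ((t/2:ℝ):ℂ) - (b:ℝ)*Complex.I = ((t/2:ℝ):ℂ) + ((-b:ℝ):ℂ)*Complex.I by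
          push_cast; ring,
        Complex.norm_add_mul_I]
    ring_nf
  have e3 : (t/2)^2 + b^2 = c := by linarith [hsq]
  rw [h, e1, e2, e3, max_self]

lemma Hmat_entries (τ lam : ℝ) (K : Matrix (Fin 1) (Fin 2) ℝ) :
    Hmat 2 τ lam K 0 0 = 1 ∧ Hmat 2 τ lam K 0 1 = τ ∧
    Hmat 2 τ lam K 1 0 = -(lam * τ * K 0 0) ∧ Hmat 2 τ lam K 1 1 = 1 - lam * τ * K 0 1 := by
  refine ⟨?_, ?_, ?_, ?_⟩ <;>
    simp [Hmat, Amat, Bmat, Matrix.sub_apply, Matrix.smul_apply, Matrix.mul_apply,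
      Fin.sum_univ_succ] <;> ring

lemma Hmat_det (τ lam : ℝ) (K : Matrix (Fin 1) (Fin 2) ℝ) :
    Hmat 2 τ lam K 0 0 * Hmat 2 τ lam K 1 1 - Hmat 2 τ lam K 0 1 * Hmat 2 τ lam K 1 0
      = 1 - lam * (τ * K 0 1 - τ^2 * K 0 0) := by
  obtain ⟨e00, e01, e10, e11⟩ := Hmat_entries τ lam K
  rw [e00, e01, e10, e11]; ring

lemma Hmat_trace (τ lam : ℝ) (K : Matrix (Fin 1) (Fin 2) ℝ) :
    Hmat 2 τ lam K 0 0 + Hmat 2 τ lam K 1 1 = 2 - lam * (τ * K 0 1) := by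
  obtain ⟨e00, e01, e10, e11⟩ := Hmat_entries τ lam K
  rw [e00, e11]; ring


set_option maxHeartbeats 2000000 in
/-- for `n = 2`, the minimum over all row vectors `K ∈ ℝ^{1×2}` of
`max(ρ(H(λ₂,K)), ρ(H(λ_N,K)))` equals `√((λ_N − λ₂)/(λ_N + λ₂))`, and the minimum is
attained exactly at `K* = [2λ₂/(τ²(λ₂+λ_N)λ_N), 2/(λ_N τ)]`. -/
theorem stmt_9 (τ : ℝ) (hτ : 0 < τ) (l2 lN : ℝ) (h2 : 0 < l2) (h2N : l2 ≤ lN) :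
    (∀ K : Matrix (Fin 1) (Fin 2) ℝ,
        Real.sqrt ((lN - l2) / (lN + l2))
          ≤ max (specRad (Hmat 2 τ l2 K)) (specRad (Hmat 2 τ lN K)))
    ∧ (∀ K : Matrix (Fin 1) (Fin 2) ℝ,
        max (specRad (Hmat 2 τ l2 K)) (specRad (Hmat 2 τ lN K))
            = Real.sqrt ((lN - l2) / (lN + l2))
          ↔ K = !![2 * l2 / (τ ^ 2 * (l2 + lN) * lN), 2 / (lN * τ)]) := by
  have hN : 0 < lN := lt_of_lt_of_le h2 h2N
  have hS : 0 < l2 + lN := by linarith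
  obtain ⟨r, hrdef⟩ : ∃ r : ℝ, r = (lN - l2) / (lN + l2) := ⟨_, rfl⟩
  rw [← hrdef]
  have hr0 : 0 ≤ r := hrdef ▸ div_nonneg (by linarith) (by linarith)
  have hr_id : r * (l2 + lN) = lN - l2 := by
    rw [hrdef, div_mul_eq_mul_div, show lN + l2 = l2 + lN from add_comm _ _,
      mul_div_assoc, div_self (ne_of_gt hS), mul_one]
  have hsqr : Real.sqrt r ^ 2 = r := Real.sq_sqrt hr0
  have hsqnn : 0 ≤ Real.sqrt r := Real.sqrt_nonneg r
  -- Lower bound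
  have lb : ∀ K : Matrix (Fin 1) (Fin 2) ℝ,
      Real.sqrt r ≤ max (specRad (Hmat 2 τ l2 K)) (specRad (Hmat 2 τ lN K)) := by
    intro K
    obtain ⟨s, hsdef⟩ : ∃ s : ℝ, s = τ * K 0 1 - τ^2 * K 0 0 := ⟨_, rfl⟩
    have hd2 : |1 - l2 * s| ≤ specRad (Hmat 2 τ l2 K) ^ 2 := by
      have h := abs_det_le_specRad_sq (Hmat 2 τ l2 K)
      rw [Hmat_det, ← hsdef] at h; exact h
    have hdN : |1 - lN * s| ≤ specRad (Hmat 2 τ lN K) ^ 2 := by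
      have h := abs_det_le_specRad_sq (Hmat 2 τ lN K)
      rw [Hmat_det, ← hsdef] at h; exact h
    have hm1 : specRad (Hmat 2 τ l2 K) ≤ max (specRad (Hmat 2 τ l2 K)) (specRad (Hmat 2 τ lN K)) :=
      le_max_left _ _
    have hm2 : specRad (Hmat 2 τ lN K) ≤ max (specRad (Hmat 2 τ l2 K)) (specRad (Hmat 2 τ lN K)) :=
      le_max_right _ _
    have hm0 : 0 ≤ max (specRad (Hmat 2 τ l2 K)) (specRad (Hmat 2 τ lN K)) :=
      le_trans (specRad_nonneg2 _) hm1
    have hn1 : 0 ≤ specRad (Hmat 2 τ l2 K) := specRad_nonneg2 _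
    have hn2 : 0 ≤ specRad (Hmat 2 τ lN K) := specRad_nonneg2 _
    have hkey : r ≤ (max (specRad (Hmat 2 τ l2 K)) (specRad (Hmat 2 τ lN K))) ^ 2 := by
      rcases le_total (s * (l2 + lN)) 2 with hc | hc
      · have h1 : r ≤ 1 - l2 * s := by nlinarith
        have h2' : 1 - l2 * s ≤ |1 - l2 * s| := le_abs_self _
        nlinarith
      · have h1 : r ≤ -(1 - lN * s) := by nlinarith
        have h2' : -(1 - lN * s) ≤ |1 - lN * s| := neg_le_abs _
        nlinarith
    calc Real.sqrt r ≤ Real.sqrt ((max (specRad (Hmat 2 τ l2 K)) (specRad (Hmat 2 τ lN K))) ^ 2) :=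
          Real.sqrt_le_sqrt hkey
    _ = _ := Real.sqrt_sq hm0
  refine ⟨lb, fun K => ⟨?_, ?_⟩⟩
  · -- equality implies K = K*
    intro hmax
    obtain ⟨s, hsdef⟩ : ∃ s : ℝ, s = τ * K 0 1 - τ^2 * K 0 0 := ⟨_, rfl⟩
    have hρ2 : specRad (Hmat 2 τ l2 K) ≤ Real.sqrt r := hmax ▸ le_max_left _ _
    have hρN : specRad (Hmat 2 τ lN K) ≤ Real.sqrt r := hmax ▸ le_max_right _ _
    have hn1 : 0 ≤ specRad (Hmat 2 τ l2 K) := specRad_nonneg2 _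
    have hn2 : 0 ≤ specRad (Hmat 2 τ lN K) := specRad_nonneg2 _
    have hd2 : |1 - l2 * s| ≤ r := by
      have h := abs_det_le_specRad_sq (Hmat 2 τ l2 K)
      rw [Hmat_det, ← hsdef] at h
      nlinarith
    have hdN : |1 - lN * s| ≤ r := by
      have h := abs_det_le_specRad_sq (Hmat 2 τ lN K)
      rw [Hmat_det, ← hsdef] at h
      nlinarith
    rw [abs_le] at hd2 hdN
    have hseq : s * (l2 + lN) = 2 := by
      apply le_antisymm
      · nlinarith [hdN.1]
      · nlinarith [hd2.2]
    have hdNval : 1 - lN * s = -r := by nlinarith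
    -- the trace of H(lN,K) is zero
    obtain ⟨r₁, r₂, hsN, hpN, hmN, horN⟩ := specRad_structure (Hmat 2 τ lN K)
    rw [Hmat_det, ← hsdef, hdNval] at hpN
    have habs1 : ‖r₁‖ ≤ Real.sqrt r := by
      rw [hmN] at hρN; exact le_trans (le_max_left _ _) hρN
    have habs2 : ‖r₂‖ ≤ Real.sqrt r := by
      rw [hmN] at hρN; exact le_trans (le_max_right _ _) hρN
    have htrace : Hmat 2 τ lN K 0 0 + Hmat 2 τ lN K 1 1 = 0 := by
      rcases horN with ⟨hi1, hi2⟩ | hconj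
      · have hr1 : r₁ = (r₁.re : ℂ) := Complex.ext rfl (by simp [hi1])
        have hr2 : r₂ = (r₂.re : ℂ) := Complex.ext rfl (by simp [hi2])
        have hxy : r₁.re * r₂.re = -r := by
          rw [hr1, hr2, ← Complex.ofReal_mul] at hpN
          exact_mod_cast hpN
        have hsum : r₁.re + r₂.re = Hmat 2 τ lN K 0 0 + Hmat 2 τ lN K 1 1 := by
          rw [hr1, hr2, ← Complex.ofReal_add] at hsN
          exact_mod_cast hsN
        have hx : |r₁.re| ≤ Real.sqrt r := by
          rw [hr1, Complex.norm_real, Real.norm_eq_abs] at habs1; exact habs1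
        have hy : |r₂.re| ≤ Real.sqrt r := by
          rw [hr2, Complex.norm_real, Real.norm_eq_abs] at habs2; exact habs2
        have hx2 : r₁.re ^ 2 ≤ r := by nlinarith [abs_nonneg r₁.re, sq_abs r₁.re]
        have hy2 : r₂.re ^ 2 ≤ r := by nlinarith [abs_nonneg r₂.re, sq_abs r₂.re]
        have hz : r₁.re + r₂.re = 0 := by nlinarith
        linarith [hsum ▸ hz]
      · rw [hconj, Complex.mul_conj] at hpN
        have hns : Complex.normSq r₁ = -r := by exact_mod_cast hpN
        have h0 : Complex.normSq r₁ = 0 := le_antisymm (by linarith [Complex.normSq_nonneg r₁]) (Complex.normSq_nonneg r₁)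
        have hr1 : r₁ = 0 := Complex.normSq_eq_zero.mp h0
        have hr2 : r₂ = 0 := by rw [hconj, hr1, map_zero]
        rw [hr1, hr2] at hsN
        have : ((Hmat 2 τ lN K 0 0 + Hmat 2 τ lN K 1 1 : ℝ) : ℂ) = 0 := by
          rw [← hsN]; ring
        exact_mod_cast this
    rw [Hmat_trace] at htrace
    have hK01 : K 0 1 = 2 / (lN * τ) := by
      rw [eq_div_iff (by positivity : lN * τ ≠ 0)]
      linear_combination -htrace
    have hK00 : K 0 0 = 2 * l2 / (τ ^ 2 * (l2 + lN) * lN) := by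
      rw [eq_div_iff (by positivity : τ ^ 2 * (l2 + lN) * lN ≠ 0)]
      have h1 : τ * K 0 1 * lN = 2 := by
        rw [hK01]; field_simp
      have h2' : s = τ * K 0 1 - τ^2 * K 0 0 := hsdef
      linear_combination (l2+lN)*h1 - lN*hseq + ((l2+lN)*lN)*h2'
    ext i j
    fin_cases i <;> fin_cases j <;> simp [hK00, hK01]
  · -- K = K* gives equality
    rintro rfl
    have hv0 : (!![2 * l2 / (τ ^ 2 * (l2 + lN) * lN), 2 / (lN * τ)] :
        Matrix (Fin 1) (Fin 2) ℝ) 0 0 = 2 * l2 / (τ ^ 2 * (l2 + lN) * lN) := by simp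
    have hv1 : (!![2 * l2 / (τ ^ 2 * (l2 + lN) * lN), 2 / (lN * τ)] :
        Matrix (Fin 1) (Fin 2) ℝ) 0 1 = 2 / (lN * τ) := by simp
    set Ks := (!![2 * l2 / (τ ^ 2 * (l2 + lN) * lN), 2 / (lN * τ)] :
        Matrix (Fin 1) (Fin 2) ℝ) with hKs
    have hρN : specRad (Hmat 2 τ lN Ks) = Real.sqrt r := by
      apply specRad_real_pair _ _ hsqnn
      · rw [Hmat_trace, hv1]
        field_simp
        ring
      · rw [Hmat_det, hv0, hv1, hsqr]
        have : lN * (τ * (2 / (lN * τ)) - τ ^ 2 * (2 * l2 / (τ ^ 2 * (l2 + lN) * lN)))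
            = 1 + r := by
          rw [hrdef]; field_simp; ring
        linarith
    have hρ2 : specRad (Hmat 2 τ l2 Ks) = Real.sqrt r := by
      have hdet : Hmat 2 τ l2 Ks 0 0 * Hmat 2 τ l2 Ks 1 1
          - Hmat 2 τ l2 Ks 0 1 * Hmat 2 τ l2 Ks 1 0 = r := by
        rw [Hmat_det, hv0, hv1, hrdef]
        field_simp
        ring
      apply specRad_conj_pair _ _ ?_ hdet
      rw [Hmat_trace, hv1, hdet]
      have ht2 : τ * (2 / (lN * τ)) = 2 / lN := by field_simp
      have e : (2 - l2 * (2 / lN)) ^ 2 = 4 * (lN - l2) ^ 2 / lN ^ 2 := by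
        field_simp; ring
      rw [ht2, hrdef, e, show 4 * ((lN - l2) / (lN + l2)) = 4 * (lN - l2) / (lN + l2) by ring,
        div_le_div_iff₀ (by positivity) (by linarith : (0:ℝ) < lN + l2)]
      nlinarith [mul_nonneg (sub_nonneg.mpr h2N) (sq_nonneg l2)]
    rw [hρ2, hρN, max_self]
end
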